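/- Let μ : ℝ → ℝ satisfy 0 < μ₁ ≤ μ(x) ≤ μ₂ < ∞ and φ : ℝ → ℝ be measurable, and set f(x) = (μ(x)/μ(-x)) e^{iφ(x)}. Define (TΨ)(x) = f(x)Ψ(-x) on L²(ℝ) and Q² = (1/2)(1 + μ²(-x)/μ²(x)) (multiplication operator). Then Q is bounded, positive, invertible, the inner product h_T(Φ,Ψ) := ⟪Q²Φ, Ψ⟫ is T-invariant, and QTQ⁻¹ equals the operator Ψ(x) ↦ e^{iφ(x)}Ψ(-x), which is unitary on L²(ℝ). -/

import Mathlib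

open MeasureTheory

/-- For `f(x) = (μ(x)/μ(-x)) e^{iφ(x)}`, `(TΨ)(x) = f(x)Ψ(-x)` on `L²(ℝ)` and
`Q² = (1/2)(1 + μ²(-x)/μ²(x))` (multiplication operator): `Q²` is bounded, positive and
invertible, the form `h_T(Φ,Ψ) = ⟪Q²Φ, Ψ⟫` is `T`-invariant, and `QTQ⁻¹` is the operator
`Ψ(x) ↦ e^{iφ(x)}Ψ(-x)`, which is unitary on `L²(ℝ)`. -/
theorem parity_example_invariant_metric_and_unitary
    (μ φ : ℝ → ℝ) (μ₁ μ₂ : ℝ) (hμmeas : Measurable μ) (hφmeas : Measurable φ)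
    (hμ₁ : 0 < μ₁) (hlb : ∀ x, μ₁ ≤ μ x) (hub : ∀ x, μ x ≤ μ₂)
    (f : ℝ → ℂ) (hf : f = fun x => ((μ x / μ (-x) : ℝ) : ℂ) * Complex.exp (Complex.I * φ x))
    (T : (ℝ → ℂ) → (ℝ → ℂ)) (hT : T = fun Ψ x => f x * Ψ (-x))
    (q : ℝ → ℝ) (hq : q = fun x => (1 + μ (-x) ^ 2 / μ x ^ 2) / 2)
    (V : (ℝ → ℂ) → (ℝ → ℂ)) (hV : V = fun Ψ x => Complex.exp (Complex.I * φ x) * Ψ (-x)) :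
    -- Q² is bounded, positive and invertible as a multiplication operator
    (∃ m M : ℝ, 0 < m ∧ ∀ x, m ≤ q x ∧ q x ≤ M) ∧
    -- h_T(Φ,Ψ) = ⟪Q²Φ,Ψ⟫ is T-invariant
    (∀ Φ Ψ : ℝ → ℂ, MemLp Φ 2 (volume : Measure ℝ) → MemLp Ψ 2 (volume : Measure ℝ) →
      ∫ x : ℝ, (q x : ℂ) * (starRingEnd ℂ) (T Φ x) * T Ψ x
        = ∫ x : ℝ, (q x : ℂ) * (starRingEnd ℂ) (Φ x) * Ψ x) ∧
    -- Q T Q⁻¹ = e^{iφ} P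
    (∀ Ψ : ℝ → ℂ, ∀ x : ℝ,
      (Real.sqrt (q x) : ℂ) * T (fun y => ((Real.sqrt (q y))⁻¹ : ℝ) * Ψ y) x = V Ψ x) ∧
    -- e^{iφ} P is unitary on L²(ℝ)
    (∀ Φ Ψ : ℝ → ℂ, MemLp Φ 2 (volume : Measure ℝ) → MemLp Ψ 2 (volume : Measure ℝ) →
      ∫ x : ℝ, (starRingEnd ℂ) (V Φ x) * V Ψ x = ∫ x : ℝ, (starRingEnd ℂ) (Φ x) * Ψ x) ∧
    Function.Bijective V := by
  have hpos : ∀ x, (0:ℝ) < μ x := fun x => hμ₁.trans_le (hlb x)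
  have hne : ∀ x, μ x ≠ 0 := fun x => (hpos x).ne'
  have hμ₂ : (0:ℝ) < μ₂ := hμ₁.trans_le ((hlb 0).trans (hub 0))
  have hqrel : ∀ x, q (-x) = q x * (μ x / μ (-x)) ^ 2 := by
    intro x
    simp only [hq, neg_neg]
    field_simp [hne x, hne (-x)]
    ring
  have hqpos : ∀ x, 0 < q x := by
    intro x
    simp only [hq]
    have h1 := hpos x
    have h2 := hpos (-x)
    positivity
  have hexp : ∀ t : ℝ, (starRingEnd ℂ) (Complex.exp (Complex.I * t)) * Complex.exp (Complex.I * t) = 1 := by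
    intro t
    rw [← Complex.exp_conj, ← Complex.exp_add]
    have : (starRingEnd ℂ) (Complex.I * t) + Complex.I * t = 0 := by
      simp [map_mul, Complex.conj_I, Complex.conj_ofReal]
    rw [this, Complex.exp_zero]
  refine ⟨?_, ?_, ?_, ?_, ?_⟩
  · refine ⟨(1 + μ₁ ^ 2 / μ₂ ^ 2) / 2, (1 + μ₂ ^ 2 / μ₁ ^ 2) / 2, by positivity, fun x => ?_⟩
    constructor
    · simp only [hq]
      have h : μ₁ ^ 2 / μ₂ ^ 2 ≤ μ (-x) ^ 2 / μ x ^ 2 := div_le_div₀ (sq_nonneg (μ (-x))) (by nlinarith [hlb (-x), hμ₁]) (pow_pos (hpos x) 2) (by nlinarith [hub x, hpos x])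
      linarith
    · simp only [hq]
      have h : μ (-x) ^ 2 / μ x ^ 2 ≤ μ₂ ^ 2 / μ₁ ^ 2 := div_le_div₀ (sq_nonneg μ₂) (by nlinarith [hub (-x), hpos (-x)]) (pow_pos hμ₁ 2) (by nlinarith [hlb x, hμ₁])
      linarith
  · intro Φ Ψ _ _
    have key : (fun x => (q x : ℂ) * (starRingEnd ℂ) (T Φ x) * T Ψ x)
        = fun x => (fun y => (q y : ℂ) * (starRingEnd ℂ) (Φ y) * Ψ y) (-x) := by
      funext x
      simp only [hT, hf, map_mul, Complex.conj_ofReal]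
      rw [hqrel x]
      have h1 := hexp (φ x)
      calc (q x : ℂ) * (((μ x / μ (-x) : ℝ) : ℂ) * (starRingEnd ℂ) (Complex.exp (Complex.I * φ x)) *
              (starRingEnd ℂ) (Φ (-x))) * (((μ x / μ (-x) : ℝ) : ℂ) * Complex.exp (Complex.I * φ x) * Ψ (-x))
          = ((q x : ℂ) * ((μ x / μ (-x) : ℝ) : ℂ) ^ 2) *
              ((starRingEnd ℂ) (Complex.exp (Complex.I * φ x)) * Complex.exp (Complex.I * φ x)) *
              ((starRingEnd ℂ) (Φ (-x)) * Ψ (-x)) := by ring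
        _ = ((q x * (μ x / μ (-x)) ^ 2 : ℝ) : ℂ) * (starRingEnd ℂ) (Φ (-x)) * Ψ (-x) := by
            rw [h1]; push_cast; try ring
    rw [key]
    exact MeasureTheory.integral_neg_eq_self (fun y => (q y : ℂ) * (starRingEnd ℂ) (Φ y) * Ψ y) volume
  · intro Ψ x
    simp only [hT, hf, hV]
    have hs : Real.sqrt (q (-x)) = Real.sqrt (q x) * (μ x / μ (-x)) := by
      rw [hqrel x, Real.sqrt_mul (hqpos x).le, Real.sqrt_sq (div_pos (hpos x) (hpos (-x))).le]
    have hkey : Real.sqrt (q x) * (μ x / μ (-x)) * (Real.sqrt (q (-x)))⁻¹ = 1 := by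
      have h1 : Real.sqrt (q x) ≠ 0 := (Real.sqrt_pos.mpr (hqpos x)).ne'
      have h2 : μ x / μ (-x) ≠ 0 := div_ne_zero (hne x) (hne (-x))
      rw [hs]
      exact mul_inv_cancel₀ (mul_ne_zero h1 h2)
    calc ((Real.sqrt (q x) : ℝ) : ℂ) * (((μ x / μ (-x) : ℝ) : ℂ) * Complex.exp (Complex.I * φ x) *
            ((((Real.sqrt (q (-x)))⁻¹ : ℝ) : ℂ) * Ψ (-x)))
        = ((Real.sqrt (q x) * (μ x / μ (-x)) * (Real.sqrt (q (-x)))⁻¹ : ℝ) : ℂ) *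
            (Complex.exp (Complex.I * φ x) * Ψ (-x)) := by push_cast; ring
      _ = Complex.exp (Complex.I * φ x) * Ψ (-x) := by rw [hkey]; push_cast; ring
  · intro Φ Ψ _ _
    have key : (fun x => (starRingEnd ℂ) (V Φ x) * V Ψ x)
        = fun x => (fun y => (starRingEnd ℂ) (Φ y) * Ψ y) (-x) := by
      funext x
      simp only [hV, map_mul]
      have h1 := hexp (φ x)
      calc (starRingEnd ℂ) (Complex.exp (Complex.I * φ x)) * (starRingEnd ℂ) (Φ (-x)) *
              (Complex.exp (Complex.I * φ x) * Ψ (-x))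
          = ((starRingEnd ℂ) (Complex.exp (Complex.I * φ x)) * Complex.exp (Complex.I * φ x)) *
              ((starRingEnd ℂ) (Φ (-x)) * Ψ (-x)) := by ring
        _ = (starRingEnd ℂ) (Φ (-x)) * Ψ (-x) := by rw [h1]; ring
    rw [key]
    exact MeasureTheory.integral_neg_eq_self (fun y => (starRingEnd ℂ) (Φ y) * Ψ y) volume
  · rw [Function.bijective_iff_has_inverse]
    refine ⟨fun Ψ x => Complex.exp (-(Complex.I * φ (-x))) * Ψ (-x), ?_, ?_⟩ <;>
    · intro Ψ
      funext x
      simp only [hV, neg_neg]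
      rw [← mul_assoc, ← Complex.exp_add]
      ring_nf
      simp [Complex.exp_zero]
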